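/- If X is a compact Hausdorff space with covering dimension 0, then for every n ≥ 1 the n-fold topological join X^{∗(n)} has covering dimension at most n − 1. -/

import Mathlib

open unitInterval

/-- `CovDimLE X n` : the Lebesgue covering dimension of `X` is at most `n`. -/
def CovDimLE (X : Type*) [TopologicalSpace X] (n : ℕ) : Prop :=
  ∀ (ι : Type) (U : ι → Set X), (∀ i, IsOpen (U i)) → (⋃ i, U i) = Set.univ →
    ∃ V : ι → Set X, (∀ i, IsOpen (V i)) ∧ (∀ i, V i ⊆ U i) ∧ (⋃ i, V i) = Set.univ ∧
      ∀ x : X, {i | x ∈ V i}.Finite ∧ {i | x ∈ V i}.ncard ≤ n + 1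

/-- The relation generating the join identifications. -/
def JoinRel (X Y : Type*) : (I × X × Y) → (I × X × Y) → Prop := fun p q =>
  (p.1 = 0 ∧ q.1 = 0 ∧ p.2.2 = q.2.2) ∨ (p.1 = 1 ∧ q.1 = 1 ∧ p.2.1 = q.2.1)

/-- The topological join `X ∗ Y`. -/
def Join (X Y : Type) [TopologicalSpace X] [TopologicalSpace Y] : Type :=
  Quot (JoinRel X Y)

instance (X Y : Type) [TopologicalSpace X] [TopologicalSpace Y] :
    TopologicalSpace (Join X Y) :=
  inferInstanceAs (TopologicalSpace (Quot (JoinRel X Y)))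

/-- Auxiliary: iterated joins together with their topologies.  `JoinNAux X k` is the
`(k+1)`-fold join `X^{∗(k+1)}`, with `X^{∗(1)} = X` and `X^{∗(k+2)} = X^{∗(k+1)} ∗ X`. -/
def JoinNAux (X : Type) [tX : TopologicalSpace X] : ℕ → Σ α : Type, TopologicalSpace α
  | 0 => ⟨X, tX⟩
  | k + 1 =>
    let p := JoinNAux X k
    letI := p.2
    ⟨Join p.1 X, inferInstanceAs (TopologicalSpace (Quot (JoinRel p.1 X)))⟩

/-- `JoinN X k` is the `(k+1)`-fold join `X^{∗(k+1)}`. -/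
def JoinN (X : Type) [TopologicalSpace X] (k : ℕ) : Type := (JoinNAux X k).1

instance (X : Type) [TopologicalSpace X] (k : ℕ) : TopologicalSpace (JoinN X k) :=
  (JoinNAux X k).2

noncomputable section AuxCovDim

open Set Topology
open scoped Classical

set_option linter.unusedSectionVars false
variable {X : Type} [TopologicalSpace X]

/-- real-valued indicator of a set -/
def cInd (C : Set X) : X → ℝ := fun x => if x ∈ C then 1 else 0

lemma cInd_nonneg (C : Set X) (x : X) : 0 ≤ cInd C x := by
  unfold cInd; split <;> norm_num

lemma cInd_mem {C : Set X} {x : X} (h : x ∈ C) : cInd C x = 1 := if_pos h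
lemma cInd_not_mem {C : Set X} {x : X} (h : x ∉ C) : cInd C x = 0 := if_neg h

lemma cInd_continuous {C : Set X} (hC : IsClopen C) : Continuous (cInd C) := by
  refine continuous_iff_continuousAt.mpr fun x => ?_
  by_cases hx : x ∈ C
  · refine (continuousAt_const (y := (1:ℝ))).congr ?_
    filter_upwards [hC.isOpen.mem_nhds hx] with y hy
    simp [cInd_mem hy]
  · refine (continuousAt_const (y := (0:ℝ))).congr ?_
    filter_upwards [hC.compl.isOpen.mem_nhds hx] with y hy
    simp [cInd_not_mem hy]

lemma cInd_inter (C D : Set X) (x : X) :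
    cInd (C ∩ D) x = min (cInd C x) (cInd D x) := by
  unfold cInd
  by_cases hC : x ∈ C <;> by_cases hD : x ∈ D <;> simp [hC, hD]

lemma cInd_compl (C : Set X) (x : X) : cInd C x + cInd Cᶜ x = 1 := by
  unfold cInd
  by_cases hC : x ∈ C <;> simp [hC]

/-- Abstract "coordinate data" on an iterated join of `X`: barycentric coordinates `τ`
and smeared indicator functions `g i C = τ i · [xᵢ ∈ C]`. -/
structure JD (X : Type) [TopologicalSpace X] (J : Type) [TopologicalSpace J] (N : ℕ) where
  τ : Fin N → J → ℝ
  g : Fin N → Set X → J → ℝ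
  cont_τ : ∀ i, Continuous (τ i)
  cont_g : ∀ i C, IsClopen C → Continuous (g i C)
  τ_nonneg : ∀ i z, 0 ≤ τ i z
  τ_sum : ∀ z, ∑ i, τ i z = 1
  g_univ : ∀ i z, g i Set.univ z = τ i z
  g_compl : ∀ i C z, g i C z + g i Cᶜ z = τ i z
  g_min : ∀ i C D z, g i (C ∩ D) z = min (g i C z) (g i D z)
  g_mult : ∀ i C z, g i C z = 0 ∨ g i C z = τ i z
  inj : ∀ z z', (∀ i, τ i z = τ i z') →
      (∀ i C, IsClopen C → g i C z = g i C z') → z = z'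

namespace JD

variable {J : Type} [TopologicalSpace J] {N : ℕ} (D : JD X J N)

lemma g_nonneg (i : Fin N) (C : Set X) (z : J) : 0 ≤ D.g i C z := by
  rcases D.g_mult i C z with h | h
  · rw [h]
  · rw [h]; exact D.τ_nonneg i z

lemma g_le_τ (i : Fin N) (C : Set X) (z : J) : D.g i C z ≤ D.τ i z := by
  have := D.g_compl i C z
  have := D.g_nonneg i Cᶜ z
  linarith

lemma g_mono (i : Fin N) {C D' : Set X} (h : C ⊆ D') (z : J) :
    D.g i C z ≤ D.g i D' z := by
  have hmin := D.g_min i C D' z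
  rw [Set.inter_eq_self_of_subset_left h] at hmin
  have := min_le_right (D.g i C z) (D.g i D' z)
  rw [← hmin] at this
  exact this

lemma g_pos_τ_pos {i : Fin N} {C : Set X} {z : J} (h : 0 < D.g i C z) :
    0 < D.τ i z := lt_of_lt_of_le h (D.g_le_τ i C z)

/-- value of `g` on a finite intersection of full-measure sets -/
lemma g_biInter {κ : Type} [DecidableEq κ] (i : Fin N) (z : J) (G : Finset κ)
    (f : κ → Set X) (h : ∀ c ∈ G, D.g i (f c) z = D.τ i z) :
    D.g i (⋂ c ∈ G, f c) z = D.τ i z := by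
  classical
  induction G using Finset.induction_on with
  | empty => simpa using D.g_univ i z
  | insert _ _ ha ih =>
      rw [Finset.set_biInter_insert, D.g_min]
      rw [h _ (Finset.mem_insert_self _ _), ih fun c hc => h c (Finset.mem_insert_of_mem hc)]
      exact min_self _

end JD

section Step

variable {J : Type} [TopologicalSpace J] {N : ℕ}

def jd0 (hsep : ∀ x y : X, x ≠ y → ∃ C : Set X, IsClopen C ∧ x ∈ C ∧ y ∉ C) :
    JD X X 1 where
  τ := fun _ _ => 1
  g := fun _ C x => cInd C x
  cont_τ := fun _ => continuous_const
  cont_g := fun _ _ hC => cInd_continuous hC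
  τ_nonneg := fun _ _ => zero_le_one
  τ_sum := by simp
  g_univ := fun i z => cInd_mem (Set.mem_univ z)
  g_compl := fun _ C z => cInd_compl C z
  g_min := fun _ C D z => cInd_inter C D z
  g_mult := by
    intro i C z
    by_cases h : z ∈ C
    · right; exact cInd_mem h
    · left; exact cInd_not_mem h
  inj := by
    intro z z' _ hg
    by_contra hne
    obtain ⟨C, hC, hz, hz'⟩ := hsep z z' hne
    have h : cInd C z = cInd C z' := hg 0 C hC
    rw [cInd_mem hz, cInd_not_mem hz'] at h
    norm_num at h

def stepτ (D : JD X J N) : Fin (N + 1) → Join J X → ℝ :=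
  Fin.lastCases
    (Quot.lift (fun p => 1 - (p.1 : ℝ)) (by
      rintro ⟨t, a, x⟩ ⟨t', a', x'⟩ (⟨h0, h0', _⟩ | ⟨h1, h1', _⟩)
      · obtain rfl : t = 0 := h0; obtain rfl : t' = 0 := h0'; rfl
      · obtain rfl : t = 1 := h1; obtain rfl : t' = 1 := h1'; rfl))
    (fun i' => Quot.lift (fun p => (p.1 : ℝ) * D.τ i' p.2.1) (by
      rintro ⟨t, a, x⟩ ⟨t', a', x'⟩ (⟨h0, h0', _⟩ | ⟨h1, h1', ha⟩)
      · obtain rfl : t = 0 := h0; obtain rfl : t' = 0 := h0'; simp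
      · obtain rfl : t = 1 := h1; obtain rfl : t' = 1 := h1'
        obtain rfl : a = a' := ha; rfl))

def stepg (D : JD X J N) : Fin (N + 1) → Set X → Join J X → ℝ := fun i C =>
  Fin.lastCases
    (Quot.lift (fun p => (1 - (p.1 : ℝ)) * cInd C p.2.2) (by
      rintro ⟨t, a, x⟩ ⟨t', a', x'⟩ (⟨h0, h0', hx⟩ | ⟨h1, h1', _⟩)
      · obtain rfl : t = 0 := h0; obtain rfl : t' = 0 := h0'
        obtain rfl : x = x' := hx; rfl
      · obtain rfl : t = 1 := h1; obtain rfl : t' = 1 := h1'; simp))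
    (fun i' => Quot.lift (fun p => (p.1 : ℝ) * D.g i' C p.2.1) (by
      rintro ⟨t, a, x⟩ ⟨t', a', x'⟩ (⟨h0, h0', _⟩ | ⟨h1, h1', ha⟩)
      · obtain rfl : t = 0 := h0; obtain rfl : t' = 0 := h0'; simp
      · obtain rfl : t = 1 := h1; obtain rfl : t' = 1 := h1'
        obtain rfl : a = a' := ha; rfl)) i

@[simp] lemma stepτ_cast (D : JD X J N) (i' : Fin N) (p : I × J × X) :
    stepτ D i'.castSucc (Quot.mk _ p) = (p.1 : ℝ) * D.τ i' p.2.1 := by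
  exact congrFun (Fin.lastCases_castSucc (motive := fun _ => Join J X → ℝ) i') _

@[simp] lemma stepτ_last (D : JD X J N) (p : I × J × X) :
    stepτ D (Fin.last N) (Quot.mk _ p) = 1 - (p.1 : ℝ) := by
  exact congrFun (Fin.lastCases_last (motive := fun _ => Join J X → ℝ)) _

@[simp] lemma stepg_cast (D : JD X J N) (i' : Fin N) (C : Set X) (p : I × J × X) :
    stepg D i'.castSucc C (Quot.mk _ p) = (p.1 : ℝ) * D.g i' C p.2.1 := by
  exact congrFun (Fin.lastCases_castSucc (motive := fun _ => Join J X → ℝ) i') _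

@[simp] lemma stepg_last (D : JD X J N) (C : Set X) (p : I × J × X) :
    stepg D (Fin.last N) C (Quot.mk _ p) = (1 - (p.1 : ℝ)) * cInd C p.2.2 := by
  exact congrFun (Fin.lastCases_last (motive := fun _ => Join J X → ℝ)) _

def jdStep (hsep : ∀ x y : X, x ≠ y → ∃ C : Set X, IsClopen C ∧ x ∈ C ∧ y ∉ C)
    (D : JD X J N) : JD X (Join J X) (N + 1) where
  τ := stepτ D
  g := stepg D
  cont_τ := by
    intro i
    induction i using Fin.lastCases with
    | last =>
        rw [show stepτ D (Fin.last N) = _ from Fin.lastCases_last (motive := fun _ => Join J X → ℝ)]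
        exact continuous_quot_lift _
          (continuous_const.sub (continuous_subtype_val.comp continuous_fst))
    | cast i' =>
        rw [show stepτ D i'.castSucc = _ from Fin.lastCases_castSucc (motive := fun _ => Join J X → ℝ) i']
        exact continuous_quot_lift _
          ((continuous_subtype_val.comp continuous_fst).mul
            ((D.cont_τ i').comp (continuous_fst.comp continuous_snd)))
  cont_g := by
    intro i C hC
    induction i using Fin.lastCases with
    | last =>
        rw [show stepg D (Fin.last N) C = _ from Fin.lastCases_last (motive := fun _ => Join J X → ℝ)]
        exact continuous_quot_lift _
          ((continuous_const.sub (continuous_subtype_val.comp continuous_fst)).mul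
            ((cInd_continuous hC).comp (continuous_snd.comp continuous_snd)))
    | cast i' =>
        rw [show stepg D i'.castSucc C = _ from Fin.lastCases_castSucc (motive := fun _ => Join J X → ℝ) i']
        exact continuous_quot_lift _
          ((continuous_subtype_val.comp continuous_fst).mul
            ((D.cont_g i' C hC).comp (continuous_fst.comp continuous_snd)))
  τ_nonneg := by
    intro i z
    obtain ⟨⟨t, a, x⟩, rfl⟩ := Quot.exists_rep z
    induction i using Fin.lastCases with
    | last => simp only [stepτ_last]; have := t.2.2; linarith
    | cast i' => simp only [stepτ_cast]; exact mul_nonneg t.2.1 (D.τ_nonneg i' a)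
  τ_sum := by
    intro z
    obtain ⟨⟨t, a, x⟩, rfl⟩ := Quot.exists_rep z
    rw [Fin.sum_univ_castSucc]
    simp only [stepτ_cast, stepτ_last, ← Finset.mul_sum, D.τ_sum]
    ring
  g_univ := by
    intro i z
    obtain ⟨⟨t, a, x⟩, rfl⟩ := Quot.exists_rep z
    induction i using Fin.lastCases with
    | last => simp [cInd_mem (Set.mem_univ x)]
    | cast i' => simp [D.g_univ]
  g_compl := by
    intro i C z
    obtain ⟨⟨t, a, x⟩, rfl⟩ := Quot.exists_rep z
    induction i using Fin.lastCases with
    | last =>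
        simp only [stepg_last, stepτ_last, ← mul_add, cInd_compl]
        ring
    | cast i' =>
        simp only [stepg_cast, stepτ_cast, ← mul_add, D.g_compl]
  g_min := by
    intro i C C' z
    obtain ⟨⟨t, a, x⟩, rfl⟩ := Quot.exists_rep z
    induction i using Fin.lastCases with
    | last =>
        simp only [stepg_last, cInd_inter]
        exact mul_min_of_nonneg _ _ (by have := t.2.2; linarith)
    | cast i' =>
        simp only [stepg_cast, D.g_min]
        exact mul_min_of_nonneg _ _ t.2.1
  g_mult := by
    intro i C z
    obtain ⟨⟨t, a, x⟩, rfl⟩ := Quot.exists_rep z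
    induction i using Fin.lastCases with
    | last =>
        simp only [stepg_last, stepτ_last]
        by_cases hx : x ∈ C
        · right; rw [cInd_mem hx, mul_one]
        · left; rw [cInd_not_mem hx, mul_zero]
    | cast i' =>
        simp only [stepg_cast, stepτ_cast]
        rcases D.g_mult i' C a with h | h
        · left; rw [h, mul_zero]
        · right; rw [h]
  inj := by
    intro z z' hτ hg
    obtain ⟨⟨t, a, x⟩, rfl⟩ := Quot.exists_rep z
    obtain ⟨⟨t', a', x'⟩, rfl⟩ := Quot.exists_rep z'
    have ht : (t : ℝ) = (t' : ℝ) := by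
      have := hτ (Fin.last N)
      simp only [stepτ_last] at this
      linarith
    have htt : t = t' := Subtype.ext ht
    subst htt
    rcases eq_or_lt_of_le t.2.1 with h0 | h0
    · -- t = 0
      have hxx : x = x' := by
        by_contra hne
        obtain ⟨C, hC, hx, hx'⟩ := hsep x x' hne
        have h := hg (Fin.last N) C hC
        simp only [stepg_last, ← h0, cInd_mem hx, cInd_not_mem hx'] at h
        norm_num at h
      exact Quot.sound (Or.inl ⟨Subtype.ext h0.symm, Subtype.ext h0.symm, hxx⟩)
    rcases eq_or_lt_of_le t.2.2 with h1 | h1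
    · -- t = 1
      have haa : a = a' := by
        refine D.inj a a' (fun i' => ?_) (fun i' C hC => ?_)
        · have := hτ i'.castSucc
          simp only [stepτ_cast, h1, one_mul] at this
          exact this
        · have := hg i'.castSucc C hC
          simp only [stepg_cast, h1, one_mul] at this
          exact this
      exact Quot.sound (Or.inr ⟨Subtype.ext h1, Subtype.ext h1, haa⟩)
    · -- 0 < t < 1
      have hne : (t : ℝ) ≠ 0 := ne_of_gt h0
      have hne1 : 1 - (t : ℝ) ≠ 0 := by linarith
      have haa : a = a' := by
        refine D.inj a a' (fun i' => ?_) (fun i' C hC => ?_)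
        · have := hτ i'.castSucc
          simp only [stepτ_cast] at this
          exact mul_left_cancel₀ hne this
        · have := hg i'.castSucc C hC
          simp only [stepg_cast] at this
          exact mul_left_cancel₀ hne this
      have hxx : x = x' := by
        by_contra hnex
        obtain ⟨C, hC, hx, hx'⟩ := hsep x x' hnex
        have h := hg (Fin.last N) C hC
        simp only [stepg_last, cInd_mem hx, cInd_not_mem hx'] at h
        rw [mul_one, mul_zero] at h
        exact hne1 h
      rw [haa, hxx]

lemma joinCompact [CompactSpace J] [CompactSpace X] : CompactSpace (Join J X) := by
  constructor
  have huniv : (Set.univ : Set (Join J X)) = Quot.mk _ '' Set.univ := by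
    ext z
    simp only [Set.image_univ, Set.mem_univ, true_iff, Set.mem_range]
    exact Quot.exists_rep z
  rw [huniv]
  exact isCompact_univ.image continuous_quot_mk

end Step

def jdN (hsep : ∀ x y : X, x ≠ y → ∃ C : Set X, IsClopen C ∧ x ∈ C ∧ y ∉ C) :
    ∀ k : ℕ, JD X (JoinN X k) (k + 1)
  | 0 => jd0 hsep
  | (k + 1) => jdStep (J := JoinN X k) hsep (jdN hsep k)

lemma joinNCompact [CompactSpace X] : ∀ k : ℕ, CompactSpace (JoinN X k)
  | 0 => ‹CompactSpace X›
  | (k + 1) => by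
      haveI := joinNCompact k
      exact joinCompact (J := JoinN X k)


section Pieces

variable {J : Type} [TopologicalSpace J] {m : ℕ}

/-- atom of the finite family `𝒞` of clopen sets determined by the sign pattern `ν` -/
def Atom (𝒞 : Finset {C : Set X // IsClopen C}) (ν : {C // C ∈ 𝒞} → Bool) : Set X :=
  ⋂ c : {C // C ∈ 𝒞}, if ν c then c.1.1 else (c.1.1)ᶜ

lemma atom_clopen (𝒞 : Finset {C : Set X // IsClopen C}) (ν : {C // C ∈ 𝒞} → Bool) :
    IsClopen (Atom 𝒞 ν) := by
  constructor
  · refine isClosed_iInter fun c => ?_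
    split
    · exact c.1.2.isClosed
    · exact c.1.2.compl.isClosed
  · refine isOpen_iInter_of_finite fun c => ?_
    split
    · exact c.1.2.isOpen
    · exact c.1.2.compl.isOpen

variable (D : JD X J (m + 1)) (𝒞 : Finset {C : Set X // IsClopen C}) (sδ : ℝ)

lemma atom_side {i : Fin (m + 1)} {z : J} {ν : {C // C ∈ 𝒞} → Bool} (c : {C // C ∈ 𝒞})
    (hpos : 0 < D.g i (Atom 𝒞 ν) z) :
    D.g i c.1.1 z = if ν c then D.τ i z else 0 := by
  have hsub : Atom 𝒞 ν ⊆ (if ν c then c.1.1 else (c.1.1)ᶜ) := Set.iInter_subset _ c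
  have hside : 0 < D.g i (if ν c then c.1.1 else (c.1.1)ᶜ) z :=
    lt_of_lt_of_le hpos (D.g_mono i hsub z)
  by_cases h : ν c
  · rw [if_pos h] at hside; rw [if_pos h]
    rcases D.g_mult i c.1.1 z with h0 | h1
    · rw [h0] at hside; exact absurd hside (lt_irrefl 0)
    · exact h1
  · rw [if_neg h] at hside; rw [if_neg h]
    rcases D.g_mult i (c.1.1)ᶜ z with h0 | h1
    · rw [h0] at hside; exact absurd hside (lt_irrefl 0)
    · have hc := D.g_compl i c.1.1 z
      rw [h1] at hc; linarith

lemma atom_exists (i : Fin (m + 1)) (z : J) (hpos : 0 < D.τ i z) :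
    ∃ ν : {C // C ∈ 𝒞} → Bool, 0 < D.g i (Atom 𝒞 ν) z := by
  classical
  refine ⟨fun c => decide (0 < D.g i c.1.1 z), ?_⟩
  have heq : D.g i (Atom 𝒞 (fun c => decide (0 < D.g i c.1.1 z))) z = D.τ i z := by
    have h1 : Atom 𝒞 (fun c => decide (0 < D.g i c.1.1 z)) =
        ⋂ c ∈ (Finset.univ : Finset {C // C ∈ 𝒞}),
          (if decide (0 < D.g i c.1.1 z) then c.1.1 else (c.1.1)ᶜ) := by
      rw [Atom]; simp
    rw [h1]
    refine D.g_biInter i z Finset.univ _ fun c _ => ?_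
    by_cases h : 0 < D.g i c.1.1 z
    · rw [if_pos (by simpa using h)]
      rcases D.g_mult i c.1.1 z with h0 | h1
      · rw [h0] at h; exact absurd h (lt_irrefl 0)
      · exact h1
    · rw [if_neg (by simpa using h)]
      have h0 : D.g i c.1.1 z = 0 := by
        rcases D.g_mult i c.1.1 z with h0 | h1
        · exact h0
        · exact absurd (h1 ▸ hpos) h
      have hc := D.g_compl i c.1.1 z
      rw [h0] at hc; linarith
  rw [heq]; exact hpos

/-- offset of the `c`-th color -/
def coff (c : Fin (m + 1)) : ℝ := sδ * c / (m + 1)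

/-- lower corners of the cube with color `c` and lattice position `v` -/
def lf (c : Fin (m + 1)) (v : Fin m → ℤ) : Fin (m + 1) → ℝ :=
  Fin.lastCases (1 - ∑ i' : Fin m, (sδ * v i' + coff sδ c + sδ))
    (fun i' => sδ * v i' + coff sδ c)

@[simp] lemma lf_cast (c : Fin (m + 1)) (v : Fin m → ℤ) (i' : Fin m) :
    lf sδ c v i'.castSucc = sδ * v i' + coff sδ c := by
  rw [lf, Fin.lastCases_castSucc]

@[simp] lemma lf_last (c : Fin (m + 1)) (v : Fin m → ℤ) :
    lf sδ c v (Fin.last m) = 1 - ∑ i' : Fin m, (sδ * v i' + coff sδ c + sδ) := by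
  rw [lf, Fin.lastCases_last]

/-- the cube part -/
def cub (c : Fin (m + 1)) (v : Fin m → ℤ) : Set J :=
  ⋂ i' : Fin m, {z | D.τ i'.castSucc z ∈
    Set.Ioo (lf sδ c v i'.castSucc) (lf sδ c v i'.castSucc + sδ)}

/-- the partition-class part -/
def xcp (sg : Fin (m + 1) → Option ({C // C ∈ 𝒞} → Bool)) : Set J :=
  ⋂ i, (sg i).elim Set.univ fun ν => {z | 0 < D.g i (Atom 𝒞 ν) z}

/-- compatibility of `σ` with the cube data -/
def pat (c : Fin (m + 1)) (v : Fin m → ℤ)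
    (sg : Fin (m + 1) → Option ({C // C ∈ 𝒞} → Bool)) : Prop :=
  ∀ i, (sg i).isSome = true ↔ sδ ≤ lf sδ c v i

/-- the pieces of the constructed cover -/
def Epiece (c : Fin (m + 1)) (v : Fin m → ℤ)
    (sg : Fin (m + 1) → Option ({C // C ∈ 𝒞} → Bool)) : Set J :=
  if pat 𝒞 sδ c v sg then cub D sδ c v ∩ xcp D 𝒞 sg else ∅

lemma epiece_open (c : Fin (m + 1)) (v : Fin m → ℤ)
    (sg : Fin (m + 1) → Option ({C // C ∈ 𝒞} → Bool)) :
    IsOpen (Epiece D 𝒞 sδ c v sg) := by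
  rw [Epiece]
  split
  · refine IsOpen.inter ?_ ?_
    · refine isOpen_iInter_of_finite fun i' => ?_
      exact (isOpen_Ioo (a := lf sδ c v i'.castSucc) (b := lf sδ c v i'.castSucc + sδ)).preimage
        (D.cont_τ i'.castSucc)
    · refine isOpen_iInter_of_finite fun i => ?_
      cases hsg : sg i with
      | none => simp
      | some ν =>
          simp only [Option.elim]
          exact (isOpen_Ioi (a := (0:ℝ))).preimage (D.cont_g i (Atom 𝒞 ν) (atom_clopen 𝒞 ν))
  · exact isOpen_empty

lemma epiece_mem {z : J} {c : Fin (m + 1)} {v : Fin m → ℤ}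
    {sg : Fin (m + 1) → Option ({C // C ∈ 𝒞} → Bool)}
    (h : z ∈ Epiece D 𝒞 sδ c v sg) :
    pat 𝒞 sδ c v sg ∧ z ∈ cub D sδ c v ∧ z ∈ xcp D 𝒞 sg := by
  rw [Epiece] at h
  split at h
  · exact ⟨by assumption, h.1, h.2⟩
  · exact absurd h (Set.notMem_empty z)

lemma cub_bounds (hsδ : 0 < sδ) {z : J} {c : Fin (m + 1)} {v : Fin m → ℤ}
    (h : z ∈ cub D sδ c v) (i : Fin (m + 1)) :
    lf sδ c v i ≤ D.τ i z ∧ D.τ i z ≤ lf sδ c v i + (m + 1) * sδ := by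
  have hmem : ∀ i' : Fin m, D.τ i'.castSucc z ∈
      Set.Ioo (lf sδ c v i'.castSucc) (lf sδ c v i'.castSucc + sδ) := by
    intro i'
    exact Set.mem_iInter.mp h i'
  induction i using Fin.lastCases with
  | cast i' =>
      obtain ⟨h1, h2⟩ := hmem i'
      constructor
      · exact le_of_lt h1
      · refine le_trans (le_of_lt h2) ?_
        have : sδ ≤ (m + 1) * sδ := by nlinarith [Nat.cast_nonneg (α := ℝ) m]
        linarith
  | last =>
      have hsum : D.τ (Fin.last m) z = 1 - ∑ i' : Fin m, D.τ i'.castSucc z := by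
        have hs := D.τ_sum z
        rw [Fin.sum_univ_castSucc] at hs
        linarith
      have hlow : ∑ i' : Fin m, D.τ i'.castSucc z ≤
          ∑ i' : Fin m, (sδ * v i' + coff sδ c + sδ) := by
        refine Finset.sum_le_sum fun i' _ => ?_
        have := (hmem i').2
        rw [lf_cast] at this
        linarith
      have hhigh : ∑ i' : Fin m, (sδ * v i' + coff sδ c) ≤
          ∑ i' : Fin m, D.τ i'.castSucc z := by
        refine Finset.sum_le_sum fun i' _ => ?_
        have := (hmem i').1
        rw [lf_cast] at this
        linarith
      have hsplit : ∑ i' : Fin m, (sδ * v i' + coff sδ c + sδ) =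
          (∑ i' : Fin m, (sδ * v i' + coff sδ c)) + m * sδ := by
        rw [Finset.sum_add_distrib]
        simp [Finset.card_univ, mul_comm]
      constructor
      · rw [lf_last, hsum]; linarith
      · rw [lf_last, hsum]
        have : (m : ℝ) * sδ ≤ ((m : ℝ) + 1) * sδ := by nlinarith
        linarith [hhigh, hsplit]

lemma epiece_unique (hsδ : 0 < sδ) {z : J} {c : Fin (m + 1)} {v v' : Fin m → ℤ}
    {sg sg' : Fin (m + 1) → Option ({C // C ∈ 𝒞} → Bool)}
    (h : z ∈ Epiece D 𝒞 sδ c v sg) (h' : z ∈ Epiece D 𝒞 sδ c v' sg') :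
    v = v' ∧ sg = sg' := by
  obtain ⟨hp, hcub, hxc⟩ := epiece_mem D 𝒞 sδ h
  obtain ⟨hp', hcub', hxc'⟩ := epiece_mem D 𝒞 sδ h'
  have hvv : v = v' := by
    funext i'
    by_contra hne
    have h1 := Set.mem_iInter.mp hcub i'
    have h2 := Set.mem_iInter.mp hcub' i'
    simp only [Set.mem_setOf_eq, Set.mem_Ioo, lf_cast] at h1 h2
    rcases lt_trichotomy (v i') (v' i') with hlt | heq | hlt
    · have hc : ((v i' : ℝ) + 1) ≤ (v' i' : ℝ) := by exact_mod_cast Int.add_one_le_iff.mpr hlt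
      nlinarith [h1.2, h2.1]
    · exact hne heq
    · have hc : ((v' i' : ℝ) + 1) ≤ (v i' : ℝ) := by exact_mod_cast Int.add_one_le_iff.mpr hlt
      nlinarith [h2.2, h1.1]
  subst hvv
  refine ⟨rfl, ?_⟩
  funext i
  have hsome : (sg i).isSome = (sg' i).isSome := by
    by_cases hle : sδ ≤ lf sδ c v i
    · rw [(hp i).mpr hle, (hp' i).mpr hle]
    · have e1 : ¬ (sg i).isSome = true := fun hh => hle ((hp i).mp hh)
      have e2 : ¬ (sg' i).isSome = true := fun hh => hle ((hp' i).mp hh)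
      simp only [Bool.not_eq_true] at e1 e2
      rw [e1, e2]
  cases hsg : sg i with
  | none =>
      rw [hsg] at hsome
      simp only [Option.isSome_none] at hsome
      exact (Option.not_isSome_iff_eq_none.mp (by rw [← hsome]; simp)).symm
  | some ν =>
      rw [hsg] at hsome
      simp only [Option.isSome_some] at hsome
      obtain ⟨ν', hν'⟩ := Option.isSome_iff_exists.mp hsome.symm
      rw [hν']
      have hgν : 0 < D.g i (Atom 𝒞 ν) z := by
        have := Set.mem_iInter.mp hxc i
        rw [hsg] at this
        exact this
      have hgν' : 0 < D.g i (Atom 𝒞 ν') z := by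
        have := Set.mem_iInter.mp hxc' i
        rw [hν'] at this
        exact this
      congr 1
      funext c₀
      by_contra hne
      have hv1 := atom_side D 𝒞 c₀ hgν
      have hv2 := atom_side D 𝒞 c₀ hgν'
      have hτpos : 0 < D.τ i z := D.g_pos_τ_pos hgν
      cases hb : ν c₀ <;> cases hb' : ν' c₀
      · exact hne (by rw [hb, hb'])
      · rw [hb] at hv1; rw [hb'] at hv2
        simp only [Bool.false_eq_true, if_false, if_true] at hv1 hv2
        rw [hv1] at hv2; linarith
      · rw [hb] at hv1; rw [hb'] at hv2
        simp only [Bool.false_eq_true, if_false, if_true] at hv1 hv2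
        rw [hv2] at hv1; linarith
      · exact hne (by rw [hb, hb'])

lemma epiece_cover (hsδ : 0 < sδ) (z : J) :
    ∃ c v sg, z ∈ Epiece D 𝒞 sδ c v sg := by
  classical
  have hm1 : (0:ℝ) < (m:ℝ) + 1 := by positivity
  have huniq : ∀ (i' : Fin m) (c c' : Fin (m + 1)),
      (∃ k : ℤ, D.τ i'.castSucc z = sδ * k + coff sδ c) →
      (∃ k : ℤ, D.τ i'.castSucc z = sδ * k + coff sδ c') → c = c' := by
    rintro i' c c' ⟨k, hk⟩ ⟨k', hk'⟩
    have e1 : sδ * ((k:ℝ) * ((m:ℝ) + 1) + c) = D.τ i'.castSucc z * ((m:ℝ) + 1) := by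
      rw [hk, coff]; field_simp
    have e2 : sδ * ((k':ℝ) * ((m:ℝ) + 1) + c') = D.τ i'.castSucc z * ((m:ℝ) + 1) := by
      rw [hk', coff]; field_simp
    have h2 : (k:ℝ) * ((m:ℝ) + 1) + c = (k':ℝ) * ((m:ℝ) + 1) + c' :=
      mul_left_cancel₀ (ne_of_gt hsδ) (e1.trans e2.symm)
    have h3 : k * ((m:ℤ) + 1) + ((c : ℕ) : ℤ) = k' * ((m:ℤ) + 1) + ((c' : ℕ) : ℤ) := by
      exact_mod_cast h2
    have hdvd : ((m:ℤ) + 1) ∣ (((c : ℕ) : ℤ) - ((c' : ℕ) : ℤ)) := ⟨k' - k, by linarith⟩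
    have habs : |(((c : ℕ) : ℤ) - ((c' : ℕ) : ℤ))| < (m:ℤ) + 1 := by
      have hc := c.isLt
      have hc' := c'.isLt
      rw [abs_lt]
      omega
    have h0 : (((c : ℕ) : ℤ) - ((c' : ℕ) : ℤ)) = 0 := Int.eq_zero_of_abs_lt_dvd hdvd habs
    have : (c : ℕ) = (c' : ℕ) := by omega
    exact Fin.ext this
  have hbadsub : ∃ c : Fin (m + 1), ∀ i' : Fin m,
      ¬ ∃ k : ℤ, D.τ i'.castSucc z = sδ * k + coff sδ c := by
    let f : Fin m → Fin (m + 1) := fun i' =>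
      if h : ∃ c, ∃ k : ℤ, D.τ i'.castSucc z = sδ * k + coff sδ c then h.choose else 0
    have hmemf : ∀ (i' : Fin m) (c : Fin (m + 1)),
        (∃ k : ℤ, D.τ i'.castSucc z = sδ * k + coff sδ c) → c = f i' := by
      intro i' c hc
      have hex : ∃ c, ∃ k : ℤ, D.τ i'.castSucc z = sδ * k + coff sδ c := ⟨c, hc⟩
      have hspec := hex.choose_spec
      have : f i' = hex.choose := by simp only [f, dif_pos hex]
      rw [this]
      exact huniq i' c hex.choose hc hspec
    have hcard : (Finset.image f Finset.univ)ᶜ.Nonempty := by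
      rw [← Finset.card_pos, Finset.card_compl]
      have h1 : (Finset.image f Finset.univ).card ≤ m :=
        le_trans Finset.card_image_le (by simp)
      have h2 : Fintype.card (Fin (m + 1)) = m + 1 := by simp
      omega
    obtain ⟨c, hc⟩ := hcard
    refine ⟨c, fun i' hb => ?_⟩
    rw [Finset.mem_compl] at hc
    exact hc (Finset.mem_image.mpr ⟨i', Finset.mem_univ _, (hmemf i' c hb).symm⟩)
  obtain ⟨c, hgood⟩ := hbadsub
  have hv : ∀ i' : Fin m, ∃ k : ℤ, D.τ i'.castSucc z ∈
      Set.Ioo (sδ * k + coff sδ c) (sδ * k + coff sδ c + sδ) := by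
    intro i'
    refine ⟨⌊(D.τ i'.castSucc z - coff sδ c) / sδ⌋, ?_, ?_⟩
    · have hle : (⌊(D.τ i'.castSucc z - coff sδ c) / sδ⌋ : ℝ) ≤
          (D.τ i'.castSucc z - coff sδ c) / sδ := Int.floor_le _
      have h1 : (⌊(D.τ i'.castSucc z - coff sδ c) / sδ⌋ : ℝ) * sδ ≤
          D.τ i'.castSucc z - coff sδ c := (le_div_iff₀ hsδ).mp hle
      rcases eq_or_lt_of_le h1 with heq | hlt
      · exact absurd ⟨⌊(D.τ i'.castSucc z - coff sδ c) / sδ⌋, by linarith⟩ (hgood i')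
      · linarith
    · have hlt : (D.τ i'.castSucc z - coff sδ c) / sδ <
          ⌊(D.τ i'.castSucc z - coff sδ c) / sδ⌋ + 1 := Int.lt_floor_add_one _
      have h1 : D.τ i'.castSucc z - coff sδ c <
          ((⌊(D.τ i'.castSucc z - coff sδ c) / sδ⌋ : ℝ) + 1) * sδ := (div_lt_iff₀ hsδ).mp hlt
      linarith [h1]
  choose v hv using hv
  have hzcub : z ∈ cub D sδ c v := by
    refine Set.mem_iInter.mpr fun i' => ?_
    simp only [Set.mem_setOf_eq, lf_cast]
    exact hv i'
  have hpos : ∀ i, sδ ≤ lf sδ c v i → 0 < D.τ i z := by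
    intro i hi
    have := (cub_bounds D sδ hsδ hzcub i).1
    linarith
  refine ⟨c, v, fun i =>
    if h : sδ ≤ lf sδ c v i then some (atom_exists D 𝒞 i z (hpos i h)).choose else none, ?_⟩
  rw [Epiece, if_pos]
  · refine ⟨hzcub, Set.mem_iInter.mpr fun i => ?_⟩
    by_cases h : sδ ≤ lf sδ c v i
    · simp only [dif_pos h, Option.elim]
      exact (atom_exists D 𝒞 i z (hpos i h)).choose_spec
    · simp only [dif_neg h, Option.elim]
      trivial
  · intro i
    by_cases h : sδ ≤ lf sδ c v i <;> simp [h]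

end Pieces


theorem mainCov {J : Type} [TopologicalSpace J] [CompactSpace J] {m : ℕ}
    (D : JD X J (m + 1)) : CovDimLE J m := by
  classical
  intro ι U hUo hUc
  by_cases hι : Nonempty ι
  swap
  · refine ⟨U, hUo, fun i => subset_rfl, hUc, fun x => ?_⟩
    exfalso
    have hx : x ∈ ⋃ i, U i := hUc ▸ Set.mem_univ x
    obtain ⟨i, -⟩ := Set.mem_iUnion.mp hx
    exact hι ⟨i⟩
  obtain ⟨j₀⟩ := hι
  by_cases hJ : Nonempty J
  swap
  · exact ⟨U, hUo, fun i => subset_rfl, hUc, fun x => (hJ ⟨x⟩).elim⟩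
  set Ω := Sum (Fin (m + 1)) (Fin (m + 1) × {C : Set X // IsClopen C}) with hΩ
  set Φ : J → Ω → ℝ :=
    fun z => Sum.elim (fun i => D.τ i z) (fun q => D.g q.1 q.2.1 z) with hΦ
  have hΦc : Continuous Φ := by
    refine continuous_pi fun ω => ?_
    cases ω with
    | inl i => exact D.cont_τ i
    | inr q => exact D.cont_g q.1 q.2.1 q.2.2
  have hΦi : Function.Injective Φ := by
    intro z z' h
    refine D.inj z z' (fun i => ?_) (fun i C hC => ?_)
    · exact congrFun h (Sum.inl i)
    · exact congrFun h (Sum.inr (i, ⟨C, hC⟩))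
  have hemb := hΦc.isClosedEmbedding hΦi
  have hind := hemb.toIsEmbedding.toIsInducing
  have hbasic : ∀ (z : J) (O : Set J), IsOpen O → z ∈ O →
      ∃ (F : Finset Ω) (ε : ℝ), 0 < ε ∧
        {w | ∀ ω ∈ F, |Φ w ω - Φ z ω| < ε} ⊆ O := by
    intro z O hO hzO
    obtain ⟨W, hW, hWp⟩ := hind.isOpen_iff.mp hO
    have hzW : Φ z ∈ W := by rw [← hWp] at hzO; exact hzO
    obtain ⟨F, u, hu, hsub⟩ := isOpen_pi_iff.mp hW (Φ z) hzW
    have hball : ∀ ω ∈ F, ∃ ε : ℝ, 0 < ε ∧ Metric.ball (Φ z ω) ε ⊆ u ω := by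
      intro ω hω
      obtain ⟨ε, hε, hb⟩ := Metric.isOpen_iff.mp (hu ω hω).1 _ (hu ω hω).2
      exact ⟨ε, hε, hb⟩
    choose! εf hεf hbf using hball
    obtain ⟨ε, hε, hb⟩ : ∃ ε : ℝ, 0 < ε ∧ ∀ ω ∈ F, Metric.ball (Φ z ω) ε ⊆ u ω := by
      rcases F.eq_empty_or_nonempty with rfl | hF
      · exact ⟨1, one_pos, by simp⟩
      · refine ⟨F.inf' hF εf, ?_, ?_⟩
        · rw [Finset.lt_inf'_iff]
          exact fun ω hω => hεf ω hω
        · intro ω hω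
          exact Set.Subset.trans (Metric.ball_subset_ball (Finset.inf'_le _ hω)) (hbf ω hω)
    refine ⟨F, ε, hε, fun w hw => ?_⟩
    rw [← hWp]
    apply hsub
    rw [Set.mem_pi]
    intro ω hω
    apply hb ω hω
    rw [Metric.mem_ball, Real.dist_eq]
    exact hw ω hω
  have hnb : ∀ z : J, ∃ (j : ι) (F : Finset Ω) (ε : ℝ), 0 < ε ∧
      {w | ∀ ω ∈ F, |Φ w ω - Φ z ω| < ε} ⊆ U j := by
    intro z
    have hz : z ∈ ⋃ i, U i := hUc ▸ Set.mem_univ z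
    obtain ⟨j, hj⟩ := Set.mem_iUnion.mp hz
    obtain ⟨F, ε, hε, hsub⟩ := hbasic z (U j) (hUo j) hj
    exact ⟨j, F, ε, hε, hsub⟩
  choose jz Fz εz hεz hsubz using hnb
  have hB'open : ∀ z : J, IsOpen {w | ∀ ω ∈ Fz z, |Φ w ω - Φ z ω| < εz z / 2} := by
    intro z
    have hrw : {w | ∀ ω ∈ Fz z, |Φ w ω - Φ z ω| < εz z / 2} =
        ⋂ ω ∈ Fz z, (fun w => Φ w ω) ⁻¹' Metric.ball (Φ z ω) (εz z / 2) := by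
      ext w
      simp [Real.dist_eq]
    rw [hrw]
    exact isOpen_biInter_finset fun ω _ =>
      Metric.isOpen_ball.preimage ((continuous_apply ω).comp hΦc)
  obtain ⟨T, hT⟩ := isCompact_univ.elim_finite_subcover
    (fun z => {w | ∀ ω ∈ Fz z, |Φ w ω - Φ z ω| < εz z / 2}) hB'open
    (fun w _ => Set.mem_iUnion.mpr ⟨w, fun ω _ => by simp [hεz w]⟩)
  have hTne : T.Nonempty := by
    obtain ⟨z⟩ := hJ
    obtain ⟨l, hl, -⟩ := Set.mem_iUnion₂.mp (hT (Set.mem_univ z))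
    exact ⟨l, hl⟩
  set ε₀ := T.inf' hTne εz with hε₀d
  have hε₀ : 0 < ε₀ := (Finset.lt_inf'_iff hTne).mpr fun l _ => hεz l
  have hε₀le : ∀ l ∈ T, ε₀ ≤ εz l := fun l hl => Finset.inf'_le _ hl
  set sδ := ε₀ / (8 * ((m : ℝ) + 2)) with hsδd
  have hsδ : 0 < sδ := by
    apply div_pos hε₀
    positivity
  set 𝒞 : Finset {C : Set X // IsClopen C} := T.biUnion (fun l =>
    (Fz l).image fun ω =>
      Sum.elim (fun _ => (⟨∅, isClopen_empty⟩ : {C : Set X // IsClopen C}))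
        (fun q => q.2) ω) with h𝒞
  have hmem𝒞 : ∀ l ∈ T, ∀ (i : Fin (m + 1)) (Cc : {C : Set X // IsClopen C}),
      Sum.inr (i, Cc) ∈ Fz l → Cc ∈ 𝒞 := by
    intro l hl i Cc hmem
    exact Finset.mem_biUnion.mpr ⟨l, hl, Finset.mem_image.mpr ⟨Sum.inr (i, Cc), hmem, rfl⟩⟩
  have h8 : ((m:ℝ) + 2) * sδ = ε₀ / 8 := by
    rw [hsδd]
    field_simp
  have hfine : ∀ c v sg, ∃ j, Epiece D 𝒞 sδ c v sg ⊆ U j := by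
    intro c v sg
    rcases Set.eq_empty_or_nonempty (Epiece D 𝒞 sδ c v sg) with he | ⟨z₀, hz₀⟩
    · exact ⟨j₀, by rw [he]; exact Set.empty_subset _⟩
    obtain ⟨l, hlT, hl⟩ := Set.mem_iUnion₂.mp (hT (Set.mem_univ z₀))
    refine ⟨jz l, fun w hw => ?_⟩
    apply hsubz l
    intro ω hω
    obtain ⟨hp, hcub, hxc⟩ := epiece_mem D 𝒞 sδ hz₀
    obtain ⟨-, hcubw, hxcw⟩ := epiece_mem D 𝒞 sδ hw
    have hbz := cub_bounds D sδ hsδ hcub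
    have hbw := cub_bounds D sδ hsδ hcubw
    have hτd : ∀ i : Fin (m + 1), |D.τ i w - D.τ i z₀| ≤ ((m:ℝ) + 1) * sδ := by
      intro i
      have h1 := hbz i
      have h2 := hbw i
      rw [abs_le]
      constructor <;> linarith [h1.1, h1.2, h2.1, h2.2]
    have hl' := hl ω hω
    have hkey : |Φ w ω - Φ z₀ ω| ≤ ((m:ℝ) + 2) * sδ := by
      cases ω with
      | inl i =>
          have hh := hτd i
          have h12 : ((m:ℝ) + 1) * sδ ≤ ((m:ℝ) + 2) * sδ := by nlinarith
          calc |Φ w (Sum.inl i) - Φ z₀ (Sum.inl i)| = |D.τ i w - D.τ i z₀| := rfl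
          _ ≤ ((m:ℝ) + 1) * sδ := hh
          _ ≤ ((m:ℝ) + 2) * sδ := h12
      | inr q =>
          obtain ⟨i, Cc⟩ := q
          have hC𝒞 : Cc ∈ 𝒞 := hmem𝒞 l hlT i Cc hω
          show |D.g i Cc.1 w - D.g i Cc.1 z₀| ≤ ((m:ℝ) + 2) * sδ
          by_cases hS : sδ ≤ lf sδ c v i
          · have hsome := (hp i).mpr hS
            obtain ⟨ν, hν⟩ := Option.isSome_iff_exists.mp hsome
            have hgw : 0 < D.g i (Atom 𝒞 ν) w := by
              have hh := Set.mem_iInter.mp hxcw i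
              rw [hν] at hh
              exact hh
            have hgz : 0 < D.g i (Atom 𝒞 ν) z₀ := by
              have hh := Set.mem_iInter.mp hxc i
              rw [hν] at hh
              exact hh
            have e1 := atom_side D 𝒞 (⟨Cc, hC𝒞⟩ : {C // C ∈ 𝒞}) hgw
            have e2 := atom_side D 𝒞 (⟨Cc, hC𝒞⟩ : {C // C ∈ 𝒞}) hgz
            by_cases hb : ν ⟨Cc, hC𝒞⟩
            · rw [if_pos hb] at e1 e2
              rw [e1, e2]
              have h12 : ((m:ℝ) + 1) * sδ ≤ ((m:ℝ) + 2) * sδ := by nlinarith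
              exact le_trans (hτd i) h12
            · rw [if_neg hb] at e1 e2
              rw [e1, e2]
              simp only [sub_zero, abs_zero]
              positivity
          · have hlfsmall : lf sδ c v i < sδ := lt_of_not_ge hS
            have hwb : D.g i Cc.1 w ≤ D.τ i w := D.g_le_τ i Cc.1 w
            have hzb : D.g i Cc.1 z₀ ≤ D.τ i z₀ := D.g_le_τ i Cc.1 z₀
            have hwn := D.g_nonneg i Cc.1 w
            have hzn := D.g_nonneg i Cc.1 z₀
            have hτw : D.τ i w ≤ ((m:ℝ) + 2) * sδ := by
              have hh := (hbw i).2
              linarith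
            have hτz : D.τ i z₀ ≤ ((m:ℝ) + 2) * sδ := by
              have hh := (hbz i).2
              linarith
            rw [abs_le]
            constructor <;> linarith
    have hεl := hε₀le l hlT
    have hεlpos := hεz l
    calc |Φ w ω - Φ l ω| ≤ |Φ w ω - Φ z₀ ω| + |Φ z₀ ω - Φ l ω| := abs_sub_le _ _ _
    _ < ε₀ / 8 + εz l / 2 := by
        have := hkey
        rw [h8] at this
        linarith [hl']
    _ ≤ εz l := by linarith
  set pick : (Fin (m + 1) × (Fin m → ℤ) × (Fin (m + 1) → Option ({C // C ∈ 𝒞} → Bool))) → ι :=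
    fun θ => (hfine θ.1 θ.2.1 θ.2.2).choose with hpickd
  refine ⟨fun j => ⋃ θ ∈ {θ | pick θ = j}, Epiece D 𝒞 sδ θ.1 θ.2.1 θ.2.2, ?_, ?_, ?_, ?_⟩
  · intro j
    exact isOpen_biUnion fun θ _ => epiece_open D 𝒞 sδ _ _ _
  · intro j
    refine Set.iUnion₂_subset fun θ hθ => ?_
    have hh := (hfine θ.1 θ.2.1 θ.2.2).choose_spec
    have hpj : pick θ = j := hθ
    rw [← hpj]
    exact hh
  · rw [Set.eq_univ_iff_forall]
    intro z
    obtain ⟨c, v, sg, hz⟩ := epiece_cover D 𝒞 sδ hsδ z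
    exact Set.mem_iUnion.mpr ⟨pick (c, v, sg),
      Set.mem_iUnion₂.mpr ⟨(c, v, sg), rfl, hz⟩⟩
  · intro z
    show {j | z ∈ ⋃ θ ∈ {θ | pick θ = j}, Epiece D 𝒞 sδ θ.1 θ.2.1 θ.2.2}.Finite ∧
      {j | z ∈ ⋃ θ ∈ {θ | pick θ = j}, Epiece D 𝒞 sδ θ.1 θ.2.1 θ.2.2}.ncard ≤ m + 1
    have hex : ∀ j, z ∈ (⋃ θ ∈ {θ | pick θ = j}, Epiece D 𝒞 sδ θ.1 θ.2.1 θ.2.2) →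
        ∃ θ, pick θ = j ∧ z ∈ Epiece D 𝒞 sδ θ.1 θ.2.1 θ.2.2 := by
      intro j hj
      obtain ⟨θ, hθ1, hθ2⟩ := Set.mem_iUnion₂.mp hj
      exact ⟨θ, hθ1, hθ2⟩
    have hinj : Set.InjOn
        (fun j => if h : ∃ θ, pick θ = j ∧ z ∈ Epiece D 𝒞 sδ θ.1 θ.2.1 θ.2.2
          then h.choose.1 else 0)
        {j | z ∈ ⋃ θ ∈ {θ | pick θ = j}, Epiece D 𝒞 sδ θ.1 θ.2.1 θ.2.2} := by
      intro j hj j' hj' hcc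
      beta_reduce at hcc
      rw [dif_pos (hex j hj), dif_pos (hex j' hj')] at hcc
      obtain ⟨hp1, hz1⟩ := (hex j hj).choose_spec
      obtain ⟨hp2, hz2⟩ := (hex j' hj').choose_spec
      rw [← hcc] at hz2
      obtain ⟨hv, hsg⟩ := epiece_unique D 𝒞 sδ hsδ hz1 hz2
      have hθeq : (hex j hj).choose = (hex j' hj').choose := by
        refine Prod.ext hcc (Prod.ext hv hsg)
      rw [← hp1, ← hp2, hθeq]
    constructor
    · exact Set.Finite.of_finite_image (Set.toFinite _) hinj
    · have h1 := Set.ncard_image_of_injOn hinj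
      have h2 : ((fun j => if h : ∃ θ, pick θ = j ∧ z ∈ Epiece D 𝒞 sδ θ.1 θ.2.1 θ.2.2
          then h.choose.1 else 0) ''
          {j | z ∈ ⋃ θ ∈ {θ | pick θ = j}, Epiece D 𝒞 sδ θ.1 θ.2.1 θ.2.2}).ncard ≤
          (Set.univ : Set (Fin (m + 1))).ncard :=
        Set.ncard_le_ncard (Set.subset_univ _) (Set.toFinite _)
      have h3 : (Set.univ : Set (Fin (m + 1))).ncard = m + 1 := by
        rw [Set.ncard_univ]
        simp
      omega


lemma sep_of_covDimZero [T2Space X] (hX : CovDimLE X 0) :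
    ∀ x y : X, x ≠ y → ∃ C : Set X, IsClopen C ∧ x ∈ C ∧ y ∉ C := by
  intro x y hxy
  obtain ⟨V, hVo, hVs, hVc, hVm⟩ := hX Bool
    (fun b => if b then ({y}ᶜ : Set X) else ({x}ᶜ : Set X))
    (by
      intro b
      cases b
      · simp only [Bool.false_eq_true, if_false]
        exact isClosed_singleton.isOpen_compl
      · simp only [if_true]
        exact isClosed_singleton.isOpen_compl)
    (by
      rw [Set.eq_univ_iff_forall]
      intro z
      by_cases hz : z = x
      · refine Set.mem_iUnion.mpr ⟨true, ?_⟩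
        simp only [if_true, Set.mem_compl_iff, Set.mem_singleton_iff]
        rw [hz]; exact hxy
      · refine Set.mem_iUnion.mpr ⟨false, ?_⟩
        simp only [Bool.false_eq_true, if_false, Set.mem_compl_iff, Set.mem_singleton_iff]
        exact hz)
  have hdis : ∀ z, ¬(z ∈ V true ∧ z ∈ V false) := by
    rintro z ⟨h1, h2⟩
    have hle := (hVm z).2
    have huniv : {b | z ∈ V b} = Set.univ := by
      ext b; cases b <;> simp [h1, h2]
    rw [huniv, Set.ncard_univ] at hle
    simp at hle
  have hxV : x ∈ V true := by
    have hmem : x ∈ ⋃ b, V b := hVc ▸ Set.mem_univ x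
    obtain ⟨b, hb⟩ := Set.mem_iUnion.mp hmem
    cases b
    · exfalso
      have := hVs false hb
      simp only [Bool.false_eq_true, if_false, Set.mem_compl_iff, Set.mem_singleton_iff] at this
      exact this trivial
    · exact hb
  have hyV : y ∉ V true := by
    intro h
    have := hVs true h
    simp only [if_true, Set.mem_compl_iff, Set.mem_singleton_iff] at this
    exact this trivial
  have hcompl : V true = (V false)ᶜ := by
    ext z
    constructor
    · intro h hz
      exact hdis z ⟨h, hz⟩
    · intro h
      have hmem : z ∈ ⋃ b, V b := hVc ▸ Set.mem_univ z
      obtain ⟨b, hb⟩ := Set.mem_iUnion.mp hmem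
      cases b
      · exact absurd hb h
      · exact hb
  refine ⟨V true, ⟨?_, hVo true⟩, hxV, hyV⟩
  rw [hcompl]
  exact (hVo false).isClosed_compl

end AuxCovDim

/-- If `X` is compact Hausdorff with covering dimension `0`, then for every `n ≥ 1` the
`n`-fold join `X^{∗(n)} = JoinN X (n-1)` has covering dimension at most `n - 1`. -/


theorem covDim_joinN_le (X : Type) [TopologicalSpace X] [CompactSpace X] [T2Space X]
    (hX : CovDimLE X 0) :
    ∀ n : ℕ, 1 ≤ n → CovDimLE (JoinN X (n - 1)) (n - 1) := by
  intro n _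
  have hsep := sep_of_covDimZero hX
  haveI := joinNCompact (X := X) (n - 1)
  exact mainCov (jdN hsep (n - 1))
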